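/- arXiv:2211.02595 — 3 statements merged into one kernel-verified Lean document; each statement's English description precedes it below -/
import Mathlib

section
/- Block structure of rotation fields tangent to a cylinder: Let 1 ≤ k ≤ n−1, let Γ = {(y,ω) : y ∈ ℝ^k, ω ∈ S^{n−k}} ⊂ ℝ^{n+1} be the cylinder of unit radius with outward unit normal ν(y,ω) = (0,ω), let M ∈ so(n+1) be an antisymmetric (n+1)×(n+1) matrix and q ∈ ℝ^{n+1}. If ⟨M(x − q), ν(x)⟩ = 0 for all x in some nonempty open subset of Γ, then M_{il} = 0 whenever k+1 ≤ i ≤ n+1 and 1 ≤ l ≤ k (so M preserves the orthogonal splitting ℝ^k ⊕ ℝ^{n−k+1}), and (Mq)_i = 0 for all k+1 ≤ i ≤ n+1. -/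
open Matrix

private lemma sum_eq_pair_aux {N : ℕ} (i j : Fin N) (hij : i ≠ j) (g : Fin N → ℝ)
    (hg : ∀ m, m ≠ i → m ≠ j → g m = 0) : ∑ m, g m = g i + g j := by
  rw [← Finset.sum_pair hij]
  refine (Finset.sum_subset (Finset.subset_univ _) fun m _ hm => ?_).symm
  simp only [Finset.mem_insert, Finset.mem_singleton, not_or] at hm
  exact hg m hm.1 hm.2

/-- **Block structure of rotation fields tangent to a cylinder** (key computation in the
proof of Lemma A.1). If `M ∈ so(n+1)` and `q ∈ ℝ^{n+1}` are such that
`⟨M(x - q), ν(x)⟩ = 0` on a nonempty open subset of the unit-radius cylinder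
`Γ = {x : Σ_{i ≥ k} xᵢ² = 1}` (with outward normal `ν(x)ᵢ = xᵢ` for `i ≥ k`, `0` else) —
an open subset of `Γ` being realized as `U ∩ Γ` for an ambient open set `U` — then the
off-diagonal blocks `M_{il}` (`i ≥ k`, `l < k`) vanish and `(Mq)ᵢ = 0` for `i ≥ k`. -/
theorem cylinder_tangent_rotation_block_structure
    (n k : ℕ) (hk : 1 ≤ k) (hkn : k < n)
    (M : Matrix (Fin (n + 1)) (Fin (n + 1)) ℝ) (hM : Mᵀ = -M)
    (q : Fin (n + 1) → ℝ)
    (U : Set (Fin (n + 1) → ℝ)) (hUopen : IsOpen U)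
    (hne : (U ∩ {x | (∑ i : Fin (n + 1), if k ≤ (i : ℕ) then x i ^ 2 else 0) = 1}).Nonempty)
    (htangent : ∀ x ∈ U,
      (∑ i : Fin (n + 1), if k ≤ (i : ℕ) then x i ^ 2 else 0) = 1 →
      (∑ i : Fin (n + 1), if k ≤ (i : ℕ) then M.mulVec (x - q) i * x i else 0) = 0) :
    (∀ i l : Fin (n + 1), k ≤ (i : ℕ) → (l : ℕ) < k → M i l = 0) ∧
    (∀ i : Fin (n + 1), k ≤ (i : ℕ) → M.mulVec q i = 0) := by
  classical
  have hMs : ∀ i j, M j i = -M i j := fun i j => by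
    have := congrFun (congrFun hM i) j
    simpa using this
  -- Step 1: reduction using antisymmetry
  have key : ∀ x ∈ U, (∑ i : Fin (n + 1), if k ≤ (i : ℕ) then x i ^ 2 else 0) = 1 →
      (∑ i : Fin (n + 1), if k ≤ (i : ℕ) then
        x i * ((∑ l : Fin (n + 1), if (l : ℕ) < k then M i l * x l else 0)
          - M.mulVec q i) else 0) = 0 := by
    intro x hxU hxΓ
    have ht := htangent x hxU hxΓ
    set f : Fin (n + 1) → Fin (n + 1) → ℝ := fun i l =>
      if k ≤ (i : ℕ) then (if (l : ℕ) < k then 0 else x i * (M i l * x l)) else 0 with hf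
    have hanti : ∀ i l, f i l = -f l i := by
      intro i l
      simp only [hf]
      by_cases h1 : k ≤ (i : ℕ) <;> by_cases h2 : k ≤ (l : ℕ)
      · rw [if_pos h1, if_pos h2, if_neg (by omega), if_neg (by omega)]
        rw [hMs i l]; ring
      · rw [if_pos h1, if_neg h2, if_pos (by omega)]; ring
      · rw [if_neg h1, if_pos h2, if_pos (by omega)]; ring
      · rw [if_neg h1, if_neg h2]; ring
    have hS : (∑ i, ∑ l, f i l) = 0 := by
      have e1 : (∑ i, ∑ l, f i l) = -(∑ i, ∑ l, f i l) := by
        nth_rewrite 2 [Finset.sum_comm]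
        rw [← Finset.sum_neg_distrib]
        refine Finset.sum_congr rfl fun i _ => ?_
        rw [← Finset.sum_neg_distrib]
        exact Finset.sum_congr rfl fun l _ => by rw [hanti i l]
      linarith
    have hsplit : (∑ i : Fin (n + 1), if k ≤ (i : ℕ) then M.mulVec (x - q) i * x i else 0)
        = (∑ i : Fin (n + 1), if k ≤ (i : ℕ) then
            x i * ((∑ l : Fin (n + 1), if (l : ℕ) < k then M i l * x l else 0)
              - M.mulVec q i) else 0) + (∑ i, ∑ l, f i l) := by
      rw [← Finset.sum_add_distrib]
      refine Finset.sum_congr rfl fun i _ => ?_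
      by_cases h1 : k ≤ (i : ℕ)
      · simp only [hf, if_pos h1]
        have h2 : M.mulVec (x - q) i = (∑ l : Fin (n+1), M i l * x l) - M.mulVec q i := by
          simp [Matrix.mulVec, dotProduct, Pi.sub_apply, mul_sub, Finset.sum_sub_distrib]
        rw [h2]
        have h3 : (∑ l : Fin (n+1), M i l * x l)
            = (∑ l : Fin (n+1), if (l : ℕ) < k then M i l * x l else 0)
              + (∑ l : Fin (n+1), if (l : ℕ) < k then 0 else M i l * x l) := by
          rw [← Finset.sum_add_distrib]
          exact Finset.sum_congr rfl fun l _ => by split <;> ring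
        have h4 : (∑ l : Fin (n+1), if (l : ℕ) < k then (0:ℝ) else x i * (M i l * x l))
            = x i * ∑ l : Fin (n+1), if (l : ℕ) < k then 0 else M i l * x l := by
          rw [Finset.mul_sum]
          exact Finset.sum_congr rfl fun l _ => by split <;> ring
        rw [h3, h4]; ring
      · simp [hf, h1]
    rw [hsplit, hS, add_zero] at ht
    exact ht
  -- Step 2: at every point of U ∩ Γ, the coefficient functionals vanish
  have lemA : ∀ p ∈ U, (∑ i : Fin (n + 1), if k ≤ (i : ℕ) then p i ^ 2 else 0) = 1 →
      (∀ l : Fin (n + 1), (l : ℕ) < k →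
        (∑ i : Fin (n + 1), if k ≤ (i : ℕ) then p i * M i l else 0) = 0)
      ∧ (∑ i : Fin (n + 1), if k ≤ (i : ℕ) then p i * M.mulVec q i else 0) = 0 := by
    intro p hpU hpΓ
    have parta : ∀ l : Fin (n + 1), (l : ℕ) < k →
        (∑ i : Fin (n + 1), if k ≤ (i : ℕ) then p i * M i l else 0) = 0 := by
      intro l hl
      set ψ : ℝ → (Fin (n + 1) → ℝ) := fun t m => if m = l then p l + t else p m with hψ
      have hψcont : Continuous ψ := by
        refine continuous_pi fun m => ?_
        simp only [hψ]
        split <;> fun_prop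
      have hψ0 : ψ 0 = p := by
        funext m; simp only [hψ]
        split
        · rename_i h; rw [add_zero, h]
        · rfl
      have hmem : ψ ⁻¹' U ∈ nhds (0 : ℝ) :=
        hψcont.continuousAt.preimage_mem_nhds (hUopen.mem_nhds (by rw [hψ0]; exact hpU))
      obtain ⟨δ, hδ, hball⟩ := Metric.mem_nhds_iff.mp hmem
      set t₁ : ℝ := δ / 2 with ht₁
      have ht₁pos : 0 < t₁ := by positivity
      have hψU : ψ t₁ ∈ U := by
        apply hball; simp only [Metric.mem_ball, Real.dist_eq, sub_zero, abs_of_pos ht₁pos]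
        rw [ht₁]; linarith
      have hψeq : ∀ m : Fin (n + 1), k ≤ (m : ℕ) → ψ t₁ m = p m := by
        intro m hm
        simp only [hψ]; rw [if_neg]; intro h; subst h; omega
      have hψΓ : (∑ i : Fin (n + 1), if k ≤ (i : ℕ) then ψ t₁ i ^ 2 else 0) = 1 := by
        rw [← hpΓ]
        refine Finset.sum_congr rfl fun i _ => ?_
        split
        · rw [hψeq i (by assumption)]
        · rfl
      have h1 := key (ψ t₁) hψU hψΓ
      have h2 := key p hpU hpΓ
      have h3 : (∑ i : Fin (n + 1), if k ≤ (i : ℕ) then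
            ψ t₁ i * ((∑ l' : Fin (n + 1), if (l' : ℕ) < k then M i l' * ψ t₁ l' else 0)
              - M.mulVec q i) else 0)
          = (∑ i : Fin (n + 1), if k ≤ (i : ℕ) then
            p i * ((∑ l' : Fin (n + 1), if (l' : ℕ) < k then M i l' * p l' else 0)
              - M.mulVec q i) else 0)
          + t₁ * (∑ i : Fin (n + 1), if k ≤ (i : ℕ) then p i * M i l else 0) := by
        rw [Finset.mul_sum, ← Finset.sum_add_distrib]
        refine Finset.sum_congr rfl fun i _ => ?_
        by_cases hi : k ≤ (i : ℕ)
        · simp only [if_pos hi]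
          have hinner : (∑ l' : Fin (n + 1), if (l' : ℕ) < k then M i l' * ψ t₁ l' else 0)
              = (∑ l' : Fin (n + 1), if (l' : ℕ) < k then M i l' * p l' else 0)
                + M i l * t₁ := by
            have e : ∀ l' : Fin (n + 1),
                (if (l' : ℕ) < k then M i l' * ψ t₁ l' else 0)
                = (if (l' : ℕ) < k then M i l' * p l' else 0)
                  + (if l' = l then M i l' * t₁ else 0) := by
              intro l'
              by_cases hll : l' = l
              · subst hll
                rw [if_pos hl, if_pos hl, if_pos rfl]
                simp only [hψ, if_pos rfl]; ring
              · have : ψ t₁ l' = p l' := by simp only [hψ]; rw [if_neg hll]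
                rw [this, if_neg hll, add_zero]
            rw [Finset.sum_congr rfl fun l' _ => e l', Finset.sum_add_distrib,
              Finset.sum_ite_eq' Finset.univ l (fun l' => M i l' * t₁)]
            simp
          rw [hψeq i hi, hinner]; ring
        · simp [hi]
      rw [h1, h2, zero_add] at h3
      have := h3.symm
      rcases mul_eq_zero.mp this with h | h
      · exact absurd h (by positivity)
      · exact h
    refine ⟨parta, ?_⟩
    have h2 := key p hpU hpΓ
    have hdouble : (∑ i : Fin (n + 1), if k ≤ (i : ℕ) then
        p i * (∑ l : Fin (n + 1), if (l : ℕ) < k then M i l * p l else 0) else 0) = 0 := by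
      have e : ∀ i : Fin (n + 1), (if k ≤ (i : ℕ) then
          p i * (∑ l : Fin (n + 1), if (l : ℕ) < k then M i l * p l else 0) else 0)
          = ∑ l : Fin (n + 1), (if (l : ℕ) < k then
              p l * (if k ≤ (i : ℕ) then p i * M i l else 0) else 0) := by
        intro i
        by_cases hi : k ≤ (i : ℕ)
        · rw [if_pos hi, Finset.mul_sum]
          refine Finset.sum_congr rfl fun l _ => ?_
          by_cases hl : (l : ℕ) < k
          · rw [if_pos hl, if_pos hl, if_pos hi]; ring
          · rw [if_neg hl, if_neg hl, mul_zero]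
        · rw [if_neg hi]
          refine (Finset.sum_eq_zero fun l _ => ?_).symm
          rw [if_neg hi, mul_zero, ite_self]
      rw [Finset.sum_congr rfl fun i _ => e i, Finset.sum_comm]
      refine Finset.sum_eq_zero fun l _ => ?_
      by_cases hl : (l : ℕ) < k
      · calc (∑ i : Fin (n+1), if (l:ℕ) < k then p l * (if k ≤ (i : ℕ) then p i * M i l else 0) else 0)
            = p l * ∑ i : Fin (n+1), (if k ≤ (i : ℕ) then p i * M i l else 0) := by
              rw [Finset.mul_sum]
              exact Finset.sum_congr rfl fun i _ => by rw [if_pos hl]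
          _ = 0 := by rw [parta l hl, mul_zero]
      · exact Finset.sum_eq_zero fun i _ => by rw [if_neg hl]
    have hsub : (∑ i : Fin (n + 1), if k ≤ (i : ℕ) then
          p i * ((∑ l : Fin (n + 1), if (l : ℕ) < k then M i l * p l else 0)
            - M.mulVec q i) else 0)
        = (∑ i : Fin (n + 1), if k ≤ (i : ℕ) then
            p i * (∑ l : Fin (n + 1), if (l : ℕ) < k then M i l * p l else 0) else 0)
          - (∑ i : Fin (n + 1), if k ≤ (i : ℕ) then p i * M.mulVec q i else 0) := by
      rw [← Finset.sum_sub_distrib]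
      refine Finset.sum_congr rfl fun i _ => ?_
      split <;> ring
    rw [hsub, hdouble, zero_sub] at h2
    linarith
  -- Step 3: a linear functional vanishing on an open patch of the sphere factor vanishes
  obtain ⟨x₀, hx₀U, hx₀Γ⟩ := hne
  have hx₀Γ' : (∑ i : Fin (n + 1), if k ≤ (i : ℕ) then x₀ i ^ 2 else 0) = 1 := hx₀Γ
  have claim : ∀ c : Fin (n + 1) → ℝ,
      (∀ p ∈ U, (∑ i : Fin (n + 1), if k ≤ (i : ℕ) then p i ^ 2 else 0) = 1 →
        (∑ i : Fin (n + 1), if k ≤ (i : ℕ) then p i * c i else 0) = 0) →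
      ∀ i : Fin (n + 1), k ≤ (i : ℕ) → c i = 0 := by
    intro c hc
    have pairEq : ∀ i j : Fin (n + 1), i ≠ j → k ≤ (i : ℕ) → k ≤ (j : ℕ) →
        x₀ i * c i + x₀ j * c j = 0 ∧ x₀ i * c j - x₀ j * c i = 0 := by
      intro i j hij hi hj
      set φ : ℝ → (Fin (n + 1) → ℝ) := fun t m =>
        if m = i then Real.cos t * x₀ i - Real.sin t * x₀ j
        else if m = j then Real.sin t * x₀ i + Real.cos t * x₀ j
        else x₀ m with hφ
      have hφcont : Continuous φ := by
        refine continuous_pi fun m => ?_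
        simp only [hφ]
        split
        · fun_prop
        · split <;> fun_prop
      have hφ0 : φ 0 = x₀ := by
        funext m
        simp only [hφ, Real.cos_zero, Real.sin_zero]
        split
        · rename_i h; subst h; ring
        · split
          · rename_i h; subst h; ring
          · rfl
      have hφother : ∀ t (m : Fin (n + 1)), m ≠ i → m ≠ j → φ t m = x₀ m := by
        intro t m h1 h2
        simp only [hφ]; rw [if_neg h1, if_neg h2]
      have hφi : ∀ t, φ t i = Real.cos t * x₀ i - Real.sin t * x₀ j := by
        intro t; simp [hφ]
      have hφj : ∀ t, φ t j = Real.sin t * x₀ i + Real.cos t * x₀ j := by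
        intro t
        have h' : j ≠ i := Ne.symm hij
        simp [hφ, h']
      have hmem : φ ⁻¹' U ∈ nhds (0 : ℝ) :=
        hφcont.continuousAt.preimage_mem_nhds (hUopen.mem_nhds (by rw [hφ0]; exact hx₀U))
      obtain ⟨δ, hδ, hball⟩ := Metric.mem_nhds_iff.mp hmem
      have hφΓ : ∀ t, (∑ m : Fin (n + 1), if k ≤ (m : ℕ) then φ t m ^ 2 else 0) = 1 := by
        intro t
        have hdiff : (∑ m : Fin (n + 1),
            ((if k ≤ (m : ℕ) then φ t m ^ 2 else 0) - (if k ≤ (m : ℕ) then x₀ m ^ 2 else 0)))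
            = 0 := by
          rw [sum_eq_pair_aux i j hij _ (fun m h1 h2 => by rw [hφother t m h1 h2, sub_self])]
          rw [if_pos hi, if_pos hi, if_pos hj, if_pos hj, hφi, hφj]
          linear_combination (x₀ i ^ 2 + x₀ j ^ 2) * (Real.sin_sq_add_cos_sq t)
        rw [Finset.sum_sub_distrib, sub_eq_zero] at hdiff
        rw [hdiff, hx₀Γ']
      have hE : ∀ t, |t| < δ →
          (Real.cos t - 1) * (x₀ i * c i + x₀ j * c j)
            + Real.sin t * (x₀ i * c j - x₀ j * c i) = 0 := by
        intro t ht
        have hφU : φ t ∈ U := hball (by simpa [Real.dist_eq] using ht)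
        have h1 := hc (φ t) hφU (hφΓ t)
        have h2 := hc x₀ hx₀U hx₀Γ'
        have hdiff : (∑ m : Fin (n + 1),
            ((if k ≤ (m : ℕ) then φ t m * c m else 0)
              - (if k ≤ (m : ℕ) then x₀ m * c m else 0))) = 0 := by
          rw [Finset.sum_sub_distrib, h1, h2, sub_zero]
        rw [sum_eq_pair_aux i j hij _ (fun m h1' h2' => by rw [hφother t m h1' h2', sub_self])]
          at hdiff
        rw [if_pos hi, if_pos hi, if_pos hj, if_pos hj, hφi, hφj] at hdiff
        linear_combination hdiff
      set t₁ : ℝ := min (δ / 2) 1 with ht₁def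
      have ht₁pos : 0 < t₁ := by
        rw [ht₁def]; exact lt_min (by linarith) one_pos
      have ht₁δ : |t₁| < δ := by
        rw [abs_of_pos ht₁pos, ht₁def]
        exact lt_of_le_of_lt (min_le_left _ _) (by linarith)
      have ht₁δ' : |(-t₁)| < δ := by rwa [abs_neg]
      have e1 := hE t₁ ht₁δ
      have e2 := hE (-t₁) ht₁δ'
      rw [Real.cos_neg, Real.sin_neg] at e2
      have hsin : 0 < Real.sin t₁ := by
        apply Real.sin_pos_of_pos_of_lt_pi ht₁pos
        calc t₁ ≤ 1 := min_le_right _ _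
        _ < Real.pi := by linarith [Real.pi_gt_three]
      have hcos : Real.cos t₁ < 1 := by
        have := Real.cos_lt_cos_of_nonneg_of_le_pi (le_refl 0)
          (by calc t₁ ≤ 1 := min_le_right _ _
              _ ≤ Real.pi := by linarith [Real.pi_gt_three]) ht₁pos
        simpa using this
      have hD : x₀ i * c j - x₀ j * c i = 0 := by
        have h := sub_eq_zero.mpr (e1.trans e2.symm)
        have h' : (2 * Real.sin t₁) * (x₀ i * c j - x₀ j * c i) = 0 := by
          linear_combination e1 - e2
        rcases mul_eq_zero.mp h' with h'' | h''
        · exact absurd h'' (by positivity)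
        · exact h''
      have hA : x₀ i * c i + x₀ j * c j = 0 := by
        have h' : (Real.cos t₁ - 1) * (x₀ i * c i + x₀ j * c j) = 0 := by
          linear_combination e1 - Real.sin t₁ * hD
        rcases mul_eq_zero.mp h' with h'' | h''
        · exact absurd h'' (by intro hh; linarith [sub_eq_zero.mp hh])
        · exact h''
      exact ⟨hA, hD⟩
    -- there is a coordinate m ≥ k with x₀ m ≠ 0
    have hex : ∃ m : Fin (n + 1), k ≤ (m : ℕ) ∧ x₀ m ≠ 0 := by
      by_contra h
      push_neg at h
      have : (∑ i : Fin (n + 1), if k ≤ (i : ℕ) then x₀ i ^ 2 else 0) = 0 := by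
        refine Finset.sum_eq_zero fun m _ => ?_
        by_cases hm : k ≤ (m : ℕ)
        · rw [if_pos hm, h m hm]; ring
        · rw [if_neg hm]
      rw [hx₀Γ'] at this
      exact one_ne_zero this
    obtain ⟨m, hmk, hm0⟩ := hex
    -- a second index ≥ k distinct from m
    have hkn1 : k < n + 1 := by omega
    have hnn1 : n < n + 1 := by omega
    set a : Fin (n + 1) := ⟨k, hkn1⟩ with ha
    set b : Fin (n + 1) := ⟨n, hnn1⟩ with hb
    have hab : a ≠ b := by
      intro h
      have : k = n := congrArg Fin.val h
      omega
    set j₀ : Fin (n + 1) := if m = a then b else a with hj₀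
    have hj₀m : j₀ ≠ m := by
      rw [hj₀]; split
      · rename_i h; rw [h]; exact hab.symm
      · rename_i h; exact fun hh => h hh.symm
    have hj₀k : k ≤ (j₀ : ℕ) := by
      rw [hj₀]; split
      · rw [hb]; exact le_of_lt hkn
      · rw [ha]
    obtain ⟨hA, hD⟩ := pairEq m j₀ (Ne.symm hj₀m) hmk hj₀k
    have hcm : c m = 0 := by
      have h' : (x₀ m ^ 2 + x₀ j₀ ^ 2) * c m = 0 := by
        linear_combination x₀ m * hA - x₀ j₀ * hD
      rcases mul_eq_zero.mp h' with h'' | h''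
      · exfalso
        have : 0 < x₀ m ^ 2 + x₀ j₀ ^ 2 := by positivity
        linarith
      · exact h''
    intro i hi
    by_cases him : i = m
    · rw [him]; exact hcm
    · obtain ⟨_, hD'⟩ := pairEq m i (fun h => him h.symm) hmk hi
      have h0 : x₀ m * c i = 0 := by
        rw [hcm, mul_zero, sub_zero] at hD'; exact hD'
      rcases mul_eq_zero.mp h0 with h | h
      · exact absurd h hm0
      · exact h
  constructor
  · intro i l hi hl
    exact claim (fun i' => M i' l) (fun p hpU hpΓ => (lemA p hpU hpΓ).1 l hl) i hi
  · intro i hi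
    exact claim (fun i' => M.mulVec q i') (fun p hpU hpΓ => (lemA p hpU hpΓ).2) i hi
end

section
/- Lemma A.2 (linear algebra on the cylinder): Let 1 ≤ k ≤ n−1 and N = (n−k+1)(n−k)/2. Regard so(n−k+1) as the subspace of so(n+1) of antisymmetric matrices of block form diag(0_{k×k}, J̄) with J̄ ∈ so(n−k+1), and equip so(n+1) with the Frobenius inner product ⟨A,B⟩ = tr(AᵀB). Let {J_α}_{α=1}^{N} be an orthonormal basis of this subspace, let b ∈ ℝ^{n+1} be orthogonal to ∩_α ker(J_α), and let A ∈ so(n+1) be Frobenius-orthogonal to so(k) ⊕ so(n−k+1) (the block-diagonal antisymmetric matrices). Let Γ = {(y,ω) : y ∈ ℝ^k, ω ∈ S^{n−k}} ⊂ ℝ^{n+1} be the cylinder of unit radius with outward unit normal ν(y,ω) = (0,ω). If there is a nonempty open subset U of Γ such that ⟨[A, J_α]x + J_α b, ν(x)⟩ = 0 for every x ∈ U and every α (where [A,J] = AJ − JA is the commutator), then A = 0 and b = 0. -/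
open Matrix

lemma aux_count_le (k n : ℕ) : (∑ i ∈ Finset.range n, if k ≤ i then 1 else 0) = n - k := by
  induction n with
  | zero => simp
  | succ n ih =>
    rw [Finset.sum_range_succ, ih]
    by_cases h : k ≤ n <;> simp [h] <;> omega

lemma aux_count_pairs (k n : ℕ) :
    2 * (∑ i ∈ Finset.range n, ∑ j ∈ Finset.range n, if k ≤ i ∧ i < j then 1 else 0)
      = (n - k) * (n - k - 1) := by
  induction n with
  | zero => simp
  | succ n ih =>
    have expand : (∑ i ∈ Finset.range (n+1), ∑ j ∈ Finset.range (n+1),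
        if k ≤ i ∧ i < j then 1 else 0)
        = (∑ i ∈ Finset.range n, ∑ j ∈ Finset.range n, if k ≤ i ∧ i < j then 1 else 0)
          + (n - k) := by
      rw [Finset.sum_range_succ]
      have h1 : ∀ i ∈ Finset.range n,
          (∑ j ∈ Finset.range (n+1), if k ≤ i ∧ i < j then 1 else 0)
          = (∑ j ∈ Finset.range n, if k ≤ i ∧ i < j then 1 else 0)
            + (if k ≤ i then 1 else 0) := by
        intro i hi
        rw [Finset.sum_range_succ]
        congr 1
        have : i < n := Finset.mem_range.mp hi
        by_cases h : k ≤ i <;> simp [h, this]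
      rw [Finset.sum_congr rfl h1, Finset.sum_add_distrib, aux_count_le]
      have h2 : (∑ j ∈ Finset.range (n+1), if k ≤ n ∧ n < j then 1 else 0) = 0 := by
        apply Finset.sum_eq_zero
        intro j hj
        have := Finset.mem_range.mp hj
        have hnot : ¬ (k ≤ n ∧ n < j) := by omega
        simp [hnot]
      rw [h2]
      omega
    rw [expand, Nat.mul_add, ih]
    rcases le_or_gt k n with h | h
    · obtain ⟨a, rfl⟩ : ∃ a, n = k + a := ⟨n - k, by omega⟩
      have e1 : k + a - k = a := by omega
      have e2 : k + a + 1 - k = a + 1 := by omega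
      rw [e1, e2]
      cases a with
      | zero => simp
      | succ s =>
        have : s + 1 - 1 = s := rfl
        rw [this]
        have : s + 1 + 1 - 1 = s + 1 := rfl
        rw [this]
        ring
    · have e1 : n - k = 0 := by omega
      have e2 : n + 1 - k = 0 := by omega
      rw [e1, e2]

/-- **Lemma A.2 (linear algebra on the cylinder)**. Let `{J_α}` be an orthonormal basis
(w.r.t. the Frobenius inner product `⟨A,B⟩ = tr(AᵀB)`) of the embedded
`so(n-k+1) ⊂ so(n+1)` (antisymmetric matrices of block form `diag(0_{k×k}, J̄)`), let
`b ∈ ℝ^{n+1}` be orthogonal to `∩_α ker J_α`, and let `A ∈ so(n+1)` be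
Frobenius-orthogonal to `so(k) ⊕ so(n-k+1)` (the block-diagonal antisymmetric matrices).
If `⟨[A, J_α]x + J_α b, ν(x)⟩ = 0` for all `α` and all `x` in a nonempty open subset of the
unit-radius cylinder `Γ = {x : Σ_{i ≥ k} xᵢ² = 1}` (outward normal `ν(x)ᵢ = xᵢ` for
`i ≥ k`, `0` else), then `A = 0` and `b = 0`. -/
theorem linear_algebra_on_cylinder
    (n k : ℕ) (hk : 1 ≤ k) (hkn : k < n)
    (N : ℕ) (hN : 2 * N = (n - k + 1) * (n - k))
    (J : Fin N → Matrix (Fin (n + 1)) (Fin (n + 1)) ℝ)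
    (hJanti : ∀ α, (J α)ᵀ = -(J α))
    (hJblock : ∀ α, ∀ i j : Fin (n + 1), ((i : ℕ) < k ∨ (j : ℕ) < k) → J α i j = 0)
    (hJortho : ∀ α β, Matrix.trace ((J α)ᵀ * J β) = if α = β then (1 : ℝ) else 0)
    (b : Fin (n + 1) → ℝ)
    (hb : ∀ v : Fin (n + 1) → ℝ, (∀ α, (J α).mulVec v = 0) →
      (∑ i : Fin (n + 1), b i * v i) = 0)
    (A : Matrix (Fin (n + 1)) (Fin (n + 1)) ℝ) (hA : Aᵀ = -A)
    (hAperp : ∀ B : Matrix (Fin (n + 1)) (Fin (n + 1)) ℝ, Bᵀ = -B →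
      (∀ i j : Fin (n + 1),
        (((i : ℕ) < k ∧ k ≤ (j : ℕ)) ∨ (k ≤ (i : ℕ) ∧ (j : ℕ) < k)) → B i j = 0) →
      Matrix.trace (Aᵀ * B) = 0)
    (U : Set (Fin (n + 1) → ℝ)) (hUopen : IsOpen U)
    (hne : (U ∩ {x | (∑ i : Fin (n + 1), if k ≤ (i : ℕ) then x i ^ 2 else 0) = 1}).Nonempty)
    (htangent : ∀ α, ∀ x ∈ U,
      (∑ i : Fin (n + 1), if k ≤ (i : ℕ) then x i ^ 2 else 0) = 1 →
      (∑ i : Fin (n + 1), if k ≤ (i : ℕ)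
        then ((A * J α - J α * A).mulVec x + (J α).mulVec b) i * x i else 0) = 0) :
    A = 0 ∧ b = 0 := by
  classical
  have hAsym : ∀ i j, A j i = - A i j := by
    intro i j
    have := congrFun (congrFun hA i) j
    simpa [Matrix.transpose_apply] using this
  have hAdiag : ∀ i j : Fin (n+1), (((i:ℕ) < k ∧ (j:ℕ) < k) ∨ (k ≤ (i:ℕ) ∧ k ≤ (j:ℕ))) → A i j = 0 := by
    intro i j hij
    by_cases hji : i = j
    · subst hji
      have := hAsym i i
      linarith
    set B : Matrix (Fin (n+1)) (Fin (n+1)) ℝ :=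
      Matrix.of fun p q => (if p = i ∧ q = j then (1:ℝ) else 0) - (if p = j ∧ q = i then 1 else 0)
      with hB
    have hBanti : Bᵀ = -B := by
      ext p q
      simp only [hB, Matrix.transpose_apply, Matrix.of_apply, Matrix.neg_apply]
      have : (q = i ∧ p = j) ↔ (p = j ∧ q = i) := and_comm
      rw [if_congr this rfl rfl]
      have : (q = j ∧ p = i) ↔ (p = i ∧ q = j) := and_comm
      rw [if_congr this rfl rfl]
      ring
    have hBblock : ∀ p q : Fin (n+1),
        (((p:ℕ) < k ∧ k ≤ (q:ℕ)) ∨ (k ≤ (p:ℕ) ∧ (q:ℕ) < k)) → B p q = 0 := by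
      intro p q hpq
      simp only [hB, Matrix.of_apply]
      have h1 : ¬ (p = i ∧ q = j) := by
        rintro ⟨rfl, rfl⟩
        omega
      have h2 : ¬ (p = j ∧ q = i) := by
        rintro ⟨rfl, rfl⟩
        omega
      simp [h1, h2]
    have htr := hAperp B hBanti hBblock
    have hcalc : Matrix.trace (Aᵀ * B) = A i j - A j i := by
      simp only [Matrix.trace, Matrix.diag, Matrix.mul_apply, Matrix.transpose_apply, hB,
        Matrix.of_apply, mul_sub, mul_ite, mul_one, mul_zero, Finset.sum_sub_distrib]
      rw [Finset.sum_comm]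
      simp [Finset.sum_ite_eq, Finset.sum_ite_eq', ite_and]
    rw [hcalc] at htr
    have := hAsym i j
    linarith

  have key : ∀ x ∈ U, (∑ i : Fin (n + 1), if k ≤ (i : ℕ) then x i ^ 2 else 0) = 1 →
      ∀ α, (J α).mulVec b = (J α * A).mulVec x := by
    intro x hxU hxG α
    -- structural facts
    have hAJ : ∀ i : Fin (n+1), k ≤ (i:ℕ) → ∀ j, (A * J α) i j = 0 := by
      intro i hi j
      rw [Matrix.mul_apply]
      apply Finset.sum_eq_zero
      intro l _
      rcases lt_or_ge (l : ℕ) k with hl | hl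
      · rw [hJblock α l j (Or.inl hl), mul_zero]
      · rw [hAdiag i l (Or.inr ⟨hi, hl⟩), zero_mul]
    have hJA : ∀ i j : Fin (n+1), k ≤ (j:ℕ) → (J α * A) i j = 0 := by
      intro i j hj
      rw [Matrix.mul_apply]
      apply Finset.sum_eq_zero
      intro l _
      rcases lt_or_ge (l : ℕ) k with hl | hl
      · rw [hJblock α i l (Or.inr hl), zero_mul]
      · rw [hAdiag l j (Or.inr ⟨hl, hj⟩), mul_zero]
    set v : Fin (n+1) → ℝ := fun i => (J α).mulVec b i - (J α * A).mulVec x i with hv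
    have hvhead : ∀ i : Fin (n+1), (i:ℕ) < k → v i = 0 := by
      intro i hi
      have h1 : (J α).mulVec b i = 0 := by
        rw [Matrix.mulVec, dotProduct]
        apply Finset.sum_eq_zero
        intro l _
        rw [hJblock α i l (Or.inl hi), zero_mul]
      have h2 : (J α * A).mulVec x i = 0 := by
        rw [Matrix.mulVec, dotProduct]
        apply Finset.sum_eq_zero
        intro l _
        rcases lt_or_ge (l:ℕ) k with hl | hl
        · rw [Matrix.mul_apply]
          have : ∀ m ∈ Finset.univ, J α i m * A m l = 0 := by
            intro m _
            rw [hJblock α i m (Or.inl hi), zero_mul]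
          rw [Finset.sum_eq_zero this, zero_mul]
        · rw [hJA i l hl, zero_mul]
      simp [hv, h1, h2]
    -- the perturbation argument
    have hmain : ∀ d : Fin (n+1) → ℝ, (∀ i : Fin (n+1), (i:ℕ) < k → d i = 0) →
        (∑ i, v i * d i) = 0 := by
      intro d hd
      set q : ℝ → ℝ := fun t => ∑ i : Fin (n+1), if k ≤ (i:ℕ) then (x i + t * d i)^2 else 0 with hqdef
      have hq0 : q 0 = 1 := by
        show (∑ i : Fin (n+1), if k ≤ (i:ℕ) then (x i + 0 * d i)^2 else 0) = 1
        simpa using hxG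
      have hqcont : Continuous q := by
        apply continuous_finset_sum
        intro i _
        by_cases h : k ≤ (i:ℕ) <;> simp [h] <;> fun_prop
      set X : ℝ → (Fin (n+1) → ℝ) :=
        fun t i => if (i:ℕ) < k then x i else (Real.sqrt (q t))⁻¹ * (x i + t * d i) with hXdef
      have hVopen : IsOpen {t : ℝ | 0 < q t} := isOpen_lt continuous_const hqcont
      have h0V : (0:ℝ) ∈ {t : ℝ | 0 < q t} := by simp [hq0]
      have hXcont : ContinuousOn X {t : ℝ | 0 < q t} := by
        rw [continuousOn_pi]
        intro i
        by_cases h : (i:ℕ) < k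
        · simp only [hXdef, h, if_true]
          exact continuousOn_const
        · simp only [hXdef, h, if_false]
          apply ContinuousOn.mul
          · apply ContinuousOn.inv₀
            · exact (hqcont.sqrt).continuousOn
            · intro t ht
              exact ne_of_gt (Real.sqrt_pos.mpr ht)
          · fun_prop
      have hX0 : X 0 = x := by
        funext i
        simp only [hXdef]
        by_cases h : (i:ℕ) < k
        · simp [h]
        · simp [h, hq0]
      have hopen2 : IsOpen ({t : ℝ | 0 < q t} ∩ X ⁻¹' U) :=
        hXcont.isOpen_inter_preimage hVopen hUopen
      have h02 : (0:ℝ) ∈ {t : ℝ | 0 < q t} ∩ X ⁻¹' U := by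
        constructor
        · exact h0V
        · simp [Set.mem_preimage, hX0, hxU]
      obtain ⟨ε, hε, hball⟩ := Metric.isOpen_iff.mp hopen2 0 h02
      have heval : ∀ t : ℝ, |t| < ε →
          (∑ i, v i * x i) + t * (∑ i, v i * d i) = 0 := by
        intro t ht
        have htmem : t ∈ {t : ℝ | 0 < q t} ∩ X ⁻¹' U := by
          apply hball
          simp [Real.dist_eq, ht]
        obtain ⟨hqt, hXtU⟩ := htmem
        have hsq : Real.sqrt (q t) > 0 := Real.sqrt_pos.mpr hqt
        -- X t is on the cylinder
        have hcyl : (∑ i : Fin (n+1), if k ≤ (i:ℕ) then X t i ^ 2 else 0) = 1 := by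
          have : ∀ i : Fin (n+1), (if k ≤ (i:ℕ) then X t i ^ 2 else 0)
              = ((Real.sqrt (q t))⁻¹)^2 * (if k ≤ (i:ℕ) then (x i + t * d i)^2 else 0) := by
            intro i
            by_cases h : k ≤ (i:ℕ)
            · simp only [h, if_true, hXdef, Nat.not_lt.mpr h, if_false]
              ring
            · simp [h]
          rw [Finset.sum_congr rfl (fun i _ => this i), ← Finset.mul_sum]
          have hqe : (∑ i : Fin (n+1), if k ≤ (i:ℕ) then (x i + t * d i)^2 else 0) = q t := rfl
          rw [hqe, ← Real.sqrt_inv]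
          rw [Real.sq_sqrt (by positivity)]
          exact inv_mul_cancel₀ (ne_of_gt hqt)
        have htang := htangent α (X t) hXtU hcyl
        -- simplify the tangency sum
        have hsimp : (∑ i : Fin (n+1), if k ≤ (i:ℕ)
            then ((A * J α - J α * A).mulVec (X t) + (J α).mulVec b) i * X t i else 0)
            = (Real.sqrt (q t))⁻¹ * ((∑ i, v i * x i) + t * (∑ i, v i * d i)) := by
          have hterm : ∀ i : Fin (n+1), (if k ≤ (i:ℕ)
              then ((A * J α - J α * A).mulVec (X t) + (J α).mulVec b) i * X t i else 0)
              = (Real.sqrt (q t))⁻¹ * (v i * x i + t * (v i * d i)) := by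
            intro i
            by_cases h : k ≤ (i:ℕ)
            · have e1 : ((A * J α).mulVec (X t)) i = 0 := by
                rw [Matrix.mulVec, dotProduct]
                apply Finset.sum_eq_zero
                intro l _
                rw [hAJ i h l, zero_mul]
              have e2 : ((J α * A).mulVec (X t)) i = ((J α * A).mulVec x) i := by
                rw [Matrix.mulVec, dotProduct, Matrix.mulVec, dotProduct]
                apply Finset.sum_congr rfl
                intro l _
                rcases lt_or_ge (l:ℕ) k with hl | hl
                · have : X t l = x l := by simp [hXdef, hl]
                  rw [this]
                · rw [hJA i l hl, zero_mul, zero_mul]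
              have e3 : X t i = (Real.sqrt (q t))⁻¹ * (x i + t * d i) := by
                simp [hXdef, Nat.not_lt.mpr h]
              simp only [h, if_true, Matrix.sub_mulVec, Pi.add_apply, Pi.sub_apply, e1, e2, e3]
              simp only [hv]
              ring
            · have hvi : v i = 0 := hvhead i (Nat.not_le.mp h)
              have hdi : d i = 0 := hd i (Nat.not_le.mp h)
              simp [h, hvi, hdi]
          rw [Finset.sum_congr rfl (fun i _ => hterm i)]
          rw [← Finset.mul_sum]
          congr 1
          rw [Finset.sum_add_distrib, ← Finset.mul_sum]
        rw [hsimp] at htang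
        rcases mul_eq_zero.mp htang with h | h
        · exact absurd h (by positivity)
        · exact h
      have h0 : (∑ i, v i * x i) = 0 := by
        have := heval 0 (by simpa using hε)
        simpa using this
      have h1 := heval (ε/2) (by rw [abs_of_pos (by linarith)]; linarith)
      rw [h0, zero_add] at h1
      rcases mul_eq_zero.mp h1 with h | h
      · linarith
      · exact h
    -- conclude v = 0
    have hvzero : v = 0 := by
      funext i
      rcases lt_or_ge (i:ℕ) k with hi | hi
      · simpa using hvhead i hi
      · set d : Fin (n+1) → ℝ := fun l => if (l:ℕ) < k then 0 else v l with hd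
        have hsum := hmain d (fun l hl => by simp [hd, hl])
        have : ∀ l : Fin (n+1), v l * d l = v l ^ 2 := by
          intro l
          by_cases h : (l:ℕ) < k
          · simp [hd, h, hvhead l h]
          · simp [hd, h]; ring
        rw [Finset.sum_congr rfl (fun l _ => this l)] at hsum
        have hzero : ∀ l ∈ Finset.univ, v l ^ 2 = 0 :=
          (Finset.sum_eq_zero_iff_of_nonneg (fun l _ => sq_nonneg (v l))).mp hsum
        have := hzero i (Finset.mem_univ i)
        simpa [pow_eq_zero_iff] using this
    funext i
    have := congrFun hvzero i
    simp only [hv, Pi.zero_apply] at this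
    linarith

  obtain ⟨x0, hx0U, hx0G⟩ := hne
  have hx0G' : (∑ i : Fin (n + 1), if k ≤ (i : ℕ) then x0 i ^ 2 else 0) = 1 := hx0G
  have hJA0 : ∀ α, J α * A = 0 := by
    intro α
    ext i j
    rcases le_or_gt k (j:ℕ) with hj | hj
    · -- tail column
      rw [Matrix.mul_apply]
      simp only [Matrix.zero_apply]
      apply Finset.sum_eq_zero
      intro l _
      rcases lt_or_ge (l : ℕ) k with hl | hl
      · rw [hJblock α i l (Or.inr hl), zero_mul]
      · rw [hAdiag l j (Or.inr ⟨hl, hj⟩), mul_zero]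
    · -- head column: perturb x0 in direction j
      set Y : ℝ → (Fin (n+1) → ℝ) := fun t l => x0 l + (if l = j then t else 0) with hY
      have hYcont : Continuous Y := by
        rw [continuous_pi_iff]
        intro l
        by_cases h : l = j <;> simp only [hY, h, if_true, if_false] <;> fun_prop
      have hY0 : Y 0 = x0 := by
        funext l
        simp [hY]
      have hWopen : IsOpen (Y ⁻¹' U) := hUopen.preimage hYcont
      have h0W : (0:ℝ) ∈ Y ⁻¹' U := by simp [Set.mem_preimage, hY0, hx0U]
      obtain ⟨ε, hε, hball⟩ := Metric.isOpen_iff.mp hWopen 0 h0W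
      have htmem : (ε/2) ∈ Y ⁻¹' U := by
        apply hball
        rw [Metric.mem_ball, Real.dist_eq, sub_zero, abs_of_pos (by linarith : (0:ℝ) < ε/2)]
        linarith
      have hYG : (∑ i : Fin (n + 1), if k ≤ (i : ℕ) then Y (ε/2) i ^ 2 else 0) = 1 := by
        rw [← hx0G']
        apply Finset.sum_congr rfl
        intro l _
        by_cases h : k ≤ (l:ℕ)
        · have hlj : l ≠ j := by
            intro hc
            rw [hc] at h
            omega
          simp [h, hY, hlj]
        · simp [h]
      have e1 := key x0 hx0U hx0G' α
      have e2 := key (Y (ε/2)) htmem hYG α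
      have e3 : (J α * A).mulVec (Y (ε/2)) i = (J α * A).mulVec x0 i := by
        rw [← e1, ← e2]
      rw [Matrix.mulVec, Matrix.mulVec, dotProduct, dotProduct] at e3
      have e4 : ∀ l : Fin (n+1), (J α * A) i l * Y (ε/2) l
          = (J α * A) i l * x0 l + (if l = j then (J α * A) i l * (ε/2) else 0) := by
        intro l
        by_cases h : l = j <;> simp [hY, h] <;> ring
      rw [Finset.sum_congr rfl (fun l _ => e4 l), Finset.sum_add_distrib,
        Finset.sum_ite_eq' Finset.univ j (fun l => (J α * A) i l * (ε/2))] at e3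
      simp only [Finset.mem_univ, if_true, add_eq_left] at e3
      rcases mul_eq_zero.mp e3 with h | h
      · simpa using h
      · exact absurd h (by positivity)
  have hJb : ∀ α, (J α).mulVec b = 0 := by
    intro α
    rw [key x0 hx0U hx0G' α, hJA0 α, Matrix.zero_mulVec]
  have hbzero : b = 0 := by
    have hsum := hb b hJb
    funext i
    have : ∀ l ∈ Finset.univ, (0:ℝ) ≤ b l * b l := fun l _ => mul_self_nonneg (b l)
    have := (Finset.sum_eq_zero_iff_of_nonneg this).mp hsum i (Finset.mem_univ i)
    simpa [mul_self_eq_zero] using this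

  have hAzero : A = 0 := by
    -- the submodule of tail-supported antisymmetric matrices
    set S : Submodule ℝ (Matrix (Fin (n + 1)) (Fin (n + 1)) ℝ) :=
      { carrier := {M | Mᵀ = -M ∧ ∀ i j : Fin (n+1), ((i:ℕ) < k ∨ (j:ℕ) < k) → M i j = 0}
        add_mem' := by
          rintro M M' ⟨h1, h2⟩ ⟨h1', h2'⟩
          refine ⟨by rw [Matrix.transpose_add, h1, h1']; abel, ?_⟩
          intro i j hij
          simp [Matrix.add_apply, h2 i j hij, h2' i j hij]
        zero_mem' := by
          refine ⟨by simp, ?_⟩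
          intro i j _
          simp
        smul_mem' := by
          rintro c M ⟨h1, h2⟩
          refine ⟨by rw [Matrix.transpose_smul, h1]; simp, ?_⟩
          intro i j hij
          simp [Matrix.smul_apply, h2 i j hij] } with hS
    have hJS : ∀ α, J α ∈ S := fun α => ⟨hJanti α, hJblock α⟩
    set J' : Fin N → S := fun α => ⟨J α, hJS α⟩ with hJ'
    -- linear independence
    have hli : LinearIndependent ℝ J' := by
      rw [Fintype.linearIndependent_iff]
      intro g hg β
      have hg' : (∑ α, g α • J α) = 0 := by
        have := congrArg (Submodule.subtype S) hg
        simpa [hJ'] using this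
      have := congrArg (fun M => Matrix.trace ((J β)ᵀ * M)) hg'
      simp only [Matrix.mul_zero, Matrix.trace_zero] at this
      rw [Matrix.mul_sum] at this
      rw [Matrix.trace_sum] at this
      simp only [Matrix.mul_smul, Matrix.trace_smul] at this
      rw [Finset.sum_congr rfl (fun α _ => by rw [hJortho β α])] at this
      simp only [smul_eq_mul, mul_ite, mul_one, mul_zero] at this
      simpa using this
    -- upper bound on the dimension of S
    set P := {p : Fin (n+1) × Fin (n+1) // k ≤ (p.1 : ℕ) ∧ (p.1 : ℕ) < (p.2 : ℕ)} with hP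
    have hcardP : Fintype.card P = N := by
      rw [Fintype.card_subtype]
      have h1 : (Finset.univ.filter
          (fun p : Fin (n+1) × Fin (n+1) => k ≤ (p.1 : ℕ) ∧ (p.1 : ℕ) < (p.2 : ℕ))).card
          = ∑ i : Fin (n+1), ∑ j : Fin (n+1),
            if k ≤ (i : ℕ) ∧ (i : ℕ) < (j : ℕ) then 1 else 0 := by
        rw [Finset.card_filter]
        rw [Fintype.sum_prod_type]
      rw [h1]
      have h2 : ∀ i : Fin (n+1), (∑ j : Fin (n+1), if k ≤ (i:ℕ) ∧ (i:ℕ) < (j:ℕ) then 1 else 0)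
          = ∑ j ∈ Finset.range (n+1), if k ≤ (i:ℕ) ∧ (i:ℕ) < j then 1 else 0 :=
        fun i => Fin.sum_univ_eq_sum_range (fun j => if k ≤ (i:ℕ) ∧ (i:ℕ) < j then 1 else 0) (n+1)
      rw [Finset.sum_congr rfl (fun i _ => h2 i)]
      rw [Fin.sum_univ_eq_sum_range
        (fun i => ∑ j ∈ Finset.range (n+1), if k ≤ i ∧ i < j then 1 else 0) (n+1)]
      have := aux_count_pairs k (n+1)
      have hval : (n + 1 - k) * (n + 1 - k - 1) = 2 * N := by
        rw [hN]
        have e1 : n + 1 - k = n - k + 1 := by omega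
        have e2 : n + 1 - k - 1 = n - k := by omega
        rw [e2, e1]
      omega
    have hfinle : Module.finrank ℝ S ≤ N := by
      let φ : S →ₗ[ℝ] (P → ℝ) :=
        { toFun := fun M p => (M : Matrix (Fin (n+1)) (Fin (n+1)) ℝ) p.1.1 p.1.2
          map_add' := by intros; rfl
          map_smul' := by intros; rfl }
      have hinj : Function.Injective φ := by
        rw [← LinearMap.ker_eq_bot, LinearMap.ker_eq_bot']
        intro M hM
        obtain ⟨hanti, hblock⟩ := M.2
        apply Subtype.ext
        ext i j
        show (M : Matrix (Fin (n+1)) (Fin (n+1)) ℝ) i j = 0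
        have hMsym : ∀ p q, (M : Matrix (Fin (n+1)) (Fin (n+1)) ℝ) q p
            = - (M : Matrix (Fin (n+1)) (Fin (n+1)) ℝ) p q := by
          intro p q
          have := congrFun (congrFun hanti p) q
          simpa [Matrix.transpose_apply] using this
        have hφ : ∀ p : P, (M : Matrix (Fin (n+1)) (Fin (n+1)) ℝ) p.1.1 p.1.2 = 0 :=
          fun p => congrFun hM p
        rcases lt_or_ge (i:ℕ) k with hi | hi
        · exact hblock i j (Or.inl hi)
        rcases lt_or_ge (j:ℕ) k with hj | hj
        · exact hblock i j (Or.inr hj)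
        rcases lt_trichotomy (i:ℕ) (j:ℕ) with hij | hij | hij
        · exact hφ ⟨(i, j), ⟨hi, hij⟩⟩
        · have : i = j := Fin.ext hij
          subst this
          have := hMsym i i
          linarith
        · have h0 : (M : Matrix (Fin (n+1)) (Fin (n+1)) ℝ) j i = 0 := hφ ⟨(j, i), ⟨hj, hij⟩⟩
          rw [hMsym i j] at h0
          linarith
      calc Module.finrank ℝ S ≤ Module.finrank ℝ (P → ℝ) :=
            LinearMap.finrank_le_finrank_of_injective hinj
        _ = Fintype.card P := Module.finrank_fintype_fun_eq_card ℝ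
        _ = N := hcardP
    have hcard : Fintype.card (Fin N) = Module.finrank ℝ S := by
      have hge : N ≤ Module.finrank ℝ S := by
        simpa using hli.fintype_card_le_finrank
      simp only [Fintype.card_fin]
      omega
    have hspan : Submodule.span ℝ (Set.range J') = ⊤ :=
      hli.span_eq_top_of_card_eq_finrank' hcard
    -- every member of S has M * A = 0
    have hMAspan : ∀ M ∈ Submodule.span ℝ (Set.range J), M * A = 0 := by
      intro M hMspan
      induction hMspan using Submodule.span_induction with
      | mem M hmem =>
        obtain ⟨α, rfl⟩ := hmem
        exact hJA0 α
      | zero => simp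
      | add M M' _ _ h h' => rw [add_mul, h, h', add_zero]
      | smul c M _ h => rw [smul_mul_assoc, h, smul_zero]
    have hMA : ∀ M ∈ S, M * A = 0 := by
      intro M hM
      apply hMAspan
      · -- M is in the span of the J's
        have h1 : (⟨M, hM⟩ : S) ∈ Submodule.span ℝ (Set.range J') := by
          rw [hspan]; trivial
        have h2 := Submodule.mem_map_of_mem (f := S.subtype) h1
        rw [Submodule.map_span] at h2
        have h3 : S.subtype '' Set.range J' = Set.range J := by
          rw [← Set.range_comp]
          congr 1
        rwa [h3] at h2
    -- conclude A = 0
    have hrow : ∀ i : Fin (n+1), k ≤ (i:ℕ) → ∀ j, A i j = 0 := by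
      intro i hi j
      -- pick p tail, p ≠ i
      have hkn1 : k < n + 1 := by omega
      have hnn1 : n < n + 1 := by omega
      set p : Fin (n+1) := if (i:ℕ) = n then ⟨k, hkn1⟩ else ⟨n, hnn1⟩ with hp
      have hpval : ((i:ℕ) = n ∧ (p:ℕ) = k) ∨ ((i:ℕ) ≠ n ∧ (p:ℕ) = n) := by
        by_cases h : (i:ℕ) = n
        · left; exact ⟨h, by simp [hp, h]⟩
        · right; exact ⟨h, by simp [hp, h]⟩
      have hpi : p ≠ i := by
        intro hc
        have hv := congrArg Fin.val hc
        rcases hpval with ⟨h1, h2⟩ | ⟨h1, h2⟩ <;> omega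
      have hpk : k ≤ (p:ℕ) := by
        rcases hpval with ⟨h1, h2⟩ | ⟨h1, h2⟩ <;> omega
      set E : Matrix (Fin (n+1)) (Fin (n+1)) ℝ :=
        Matrix.of fun u w => (if u = p ∧ w = i then (1:ℝ) else 0)
          - (if u = i ∧ w = p then 1 else 0) with hE
      have hES : E ∈ S := by
        constructor
        · ext u w
          simp only [hE, Matrix.transpose_apply, Matrix.of_apply, Matrix.neg_apply]
          have e1 : (w = p ∧ u = i) ↔ (u = i ∧ w = p) := and_comm
          have e2 : (w = i ∧ u = p) ↔ (u = p ∧ w = i) := and_comm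
          rw [if_congr e1 rfl rfl, if_congr e2 rfl rfl]
          ring
        · intro u w huw
          simp only [hE, Matrix.of_apply]
          have h1 : ¬ (u = p ∧ w = i) := by
            rintro ⟨rfl, rfl⟩
            rcases huw with h | h <;> omega
          have h2 : ¬ (u = i ∧ w = p) := by
            rintro ⟨rfl, rfl⟩
            rcases huw with h | h <;> omega
          simp [h1, h2]
      have hEA := hMA E hES
      have h0 := congrFun (congrFun hEA p) j
      rw [Matrix.mul_apply] at h0
      have hE' : ∀ l : Fin (n+1), E p l = if i = l then (1:ℝ) else 0 := by
        intro l
        simp only [hE, Matrix.of_apply]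
        have h2 : ¬ (p = i ∧ l = p) := fun hc => hpi hc.1
        by_cases h : i = l
        · subst h; simp [h2]
        · have h3 : ¬ (l = i) := fun hc => h hc.symm
          simp [h2, h3, h]
      have hsum : (∑ l : Fin (n+1), E p l * A l j) = ∑ l : Fin (n+1), if i = l then A l j else 0 :=
        Finset.sum_congr rfl (fun l _ => by rw [hE' l]; by_cases h : i = l <;> simp [h])
      rw [hsum, Finset.sum_ite_eq] at h0
      simp only [Matrix.zero_apply, Finset.mem_univ, if_true] at h0
      exact h0
    ext i j
    rcases lt_or_ge (i:ℕ) k with hi | hi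
    · rcases lt_or_ge (j:ℕ) k with hj | hj
      · simpa using hAdiag i j (Or.inl ⟨hi, hj⟩)
      · have := hrow j hj i
        have h2 := hAsym j i
        simp only [Matrix.zero_apply]
        rw [h2, this, neg_zero]
    · simpa using hrow i hi j

  exact ⟨hAzero, hbzero⟩
end

section
/- Two-sided bound for shrinker-type profile functions with prescribed asymptotic slope: Let m ≥ 1 be a real number, let L ≥ 2√2 and b > 0, and let u : [L, ∞) → ℝ be a differentiable function with u(r)² > 2m for all r ≥ L, satisfying the differential equation d/dr[u(r)²] = (w(r)/r)(u(r)² − 2m) for some function w : [L,∞) → ℝ with 2 ≤ w(r) ≤ 2 + 16/r² for all r, and with asymptotic slope lim_{r→∞} u(r)/r = b. Then for all r ≥ L: 2m + e⁻¹ b² r² ≤ u(r)² ≤ 2m + b² r². -/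
/-- **Two-sided bound for shrinker-type profile functions with prescribed asymptotic
slope** (estimate for the profile of the Kleene–Møller shrinker, from the barrier-estimate
Claim in Proposition 2.3, with `m = n - k`). If `u` is differentiable on `[L, ∞)` with
`u² > 2m`, satisfies `d/dr[u²] = (w(r)/r)(u² - 2m)` with `2 ≤ w(r) ≤ 2 + 16/r²`, and has
asymptotic slope `u(r)/r → b > 0`, then `2m + e⁻¹b²r² ≤ u(r)² ≤ 2m + b²r²` on `[L, ∞)`. -/
theorem shrinker_profile_two_sided_bound
    (m : ℝ) (hm : 1 ≤ m) (L b : ℝ) (hL : 2 * Real.sqrt 2 ≤ L) (hb : 0 < b)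
    (u w : ℝ → ℝ)
    (hdiff : ∀ r ∈ Set.Ici L, DifferentiableWithinAt ℝ u (Set.Ici L) r)
    (hularge : ∀ r ∈ Set.Ici L, 2 * m < u r ^ 2)
    (hode : ∀ r ∈ Set.Ici L,
      HasDerivWithinAt (fun s => u s ^ 2) (w r / r * (u r ^ 2 - 2 * m)) (Set.Ici L) r)
    (hw1 : ∀ r ∈ Set.Ici L, 2 ≤ w r)
    (hw2 : ∀ r ∈ Set.Ici L, w r ≤ 2 + 16 / r ^ 2)
    (hslope : Filter.Tendsto (fun r => u r / r) Filter.atTop (nhds b)) :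
    ∀ r ∈ Set.Ici L,
      2 * m + (Real.exp 1)⁻¹ * b ^ 2 * r ^ 2 ≤ u r ^ 2 ∧
      u r ^ 2 ≤ 2 * m + b ^ 2 * r ^ 2 := by
  have hs2 : (0:ℝ) < Real.sqrt 2 := Real.sqrt_pos.mpr (by norm_num)
  have hL0 : 0 < L := lt_of_lt_of_le (by positivity) hL
  have hL8 : (8:ℝ) ≤ L ^ 2 := by
    have h1 : (2 * Real.sqrt 2) ^ 2 = 8 := by
      rw [mul_pow, Real.sq_sqrt (by norm_num : (0:ℝ) ≤ 2)]; norm_num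
    calc (8:ℝ) = (2 * Real.sqrt 2) ^ 2 := h1.symm
      _ ≤ L ^ 2 := pow_le_pow_left₀ (by positivity) hL 2
  have hrpos : ∀ r ∈ Set.Ici L, (0:ℝ) < r := fun r hr => lt_of_lt_of_le hL0 hr
  set f : ℝ → ℝ := fun s => (u s ^ 2 - 2 * m) / s ^ 2 with hfdef
  set g : ℝ → ℝ := fun s => f s * Real.exp (8 / s ^ 2) with hgdef
  -- derivative of f
  have hfderiv : ∀ r ∈ Set.Ici L, HasDerivWithinAt f
      ((u r ^ 2 - 2 * m) * (w r - 2) / r ^ 3) (Set.Ici L) r := by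
    intro r hr
    have hr0 := hrpos r hr
    have h1 : HasDerivWithinAt (fun s => u s ^ 2 - 2 * m)
        (w r / r * (u r ^ 2 - 2 * m)) (Set.Ici L) r := (hode r hr).sub_const _
    have h2 : HasDerivWithinAt (fun s : ℝ => s ^ 2) (2 * r) (Set.Ici L) r := by
      simpa using (hasDerivAt_pow 2 r).hasDerivWithinAt
    have h3 := h1.div h2 (by positivity)
    refine HasDerivWithinAt.congr_deriv h3 ?_
    have hr0' : r ≠ 0 := hr0.ne'
    field_simp
  -- derivative of g
  have hEderiv : ∀ r ∈ Set.Ici L, HasDerivWithinAt (fun s => Real.exp (8 / s ^ 2))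
      (Real.exp (8 / r ^ 2) * (-16 / r ^ 3)) (Set.Ici L) r := by
    intro r hr
    have hr0 := hrpos r hr
    have h2 : HasDerivWithinAt (fun s : ℝ => s ^ 2) (2 * r) (Set.Ici L) r := by
      simpa using (hasDerivAt_pow 2 r).hasDerivWithinAt
    have h1 : HasDerivWithinAt (fun s : ℝ => 8 / s ^ 2)
        ((0 * r ^ 2 - 8 * (2 * r)) / (r ^ 2) ^ 2) (Set.Ici L) r :=
      (hasDerivWithinAt_const r _ 8).div h2 (by positivity)
    have h1' : HasDerivWithinAt (fun s : ℝ => 8 / s ^ 2) (-16 / r ^ 3) (Set.Ici L) r := by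
      convert h1 using 1
      field_simp
      ring
    exact h1'.exp
  have hgderiv : ∀ r ∈ Set.Ici L, HasDerivWithinAt g
      ((u r ^ 2 - 2 * m) * (w r - 2) / r ^ 3 * Real.exp (8 / r ^ 2)
        + f r * (Real.exp (8 / r ^ 2) * (-16 / r ^ 3))) (Set.Ici L) r := by
    intro r hr
    exact (hfderiv r hr).mul (hEderiv r hr)
  -- f is monotone
  have hfmono : MonotoneOn f (Set.Ici L) := by
    apply monotoneOn_of_deriv_nonneg (convex_Ici L)
    · exact fun r hr => (hfderiv r hr).continuousWithinAt
    · intro r hr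
      rw [interior_Ici] at hr
      exact (((hfderiv r (Set.mem_Ici.mpr hr.le)).hasDerivAt (Ici_mem_nhds hr)).differentiableAt).differentiableWithinAt
    · intro r hr
      rw [interior_Ici] at hr
      rw [((hfderiv r (Set.mem_Ici.mpr hr.le)).hasDerivAt (Ici_mem_nhds hr)).deriv]
      have hX : 0 ≤ u r ^ 2 - 2 * m := by have := hularge r (Set.mem_Ici.mpr hr.le); linarith
      have hW : 0 ≤ w r - 2 := by have := hw1 r (Set.mem_Ici.mpr hr.le); linarith
      have hr0 := hrpos r (Set.mem_Ici.mpr hr.le)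
      positivity
  -- g is antitone
  have hganti : AntitoneOn g (Set.Ici L) := by
    apply antitoneOn_of_deriv_nonpos (convex_Ici L)
    · exact fun r hr => (hgderiv r hr).continuousWithinAt
    · intro r hr
      rw [interior_Ici] at hr
      exact (((hgderiv r (Set.mem_Ici.mpr hr.le)).hasDerivAt (Ici_mem_nhds hr)).differentiableAt).differentiableWithinAt
    · intro r hr
      rw [interior_Ici] at hr
      rw [((hgderiv r (Set.mem_Ici.mpr hr.le)).hasDerivAt (Ici_mem_nhds hr)).deriv]
      have hX : 0 ≤ u r ^ 2 - 2 * m := by have := hularge r (Set.mem_Ici.mpr hr.le); linarith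
      have hw2' := hw2 r (Set.mem_Ici.mpr hr.le)
      have hr0 := hrpos r (Set.mem_Ici.mpr hr.le)
      have hE : 0 < Real.exp (8 / r ^ 2) := Real.exp_pos _
      have key : (u r ^ 2 - 2 * m) * (w r - 2) / r ^ 3
          ≤ (u r ^ 2 - 2 * m) / r ^ 2 * (16 / r ^ 3) := by
        rw [div_le_iff₀ (by positivity : (0:ℝ) < r ^ 3)] at *
        have h1 : (u r ^ 2 - 2 * m) * (w r - 2) ≤ (u r ^ 2 - 2 * m) * (16 / r ^ 2) := by
          apply mul_le_mul_of_nonneg_left _ hX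
          linarith
        calc (u r ^ 2 - 2 * m) * (w r - 2)
            ≤ (u r ^ 2 - 2 * m) * (16 / r ^ 2) := h1
          _ = (u r ^ 2 - 2 * m) / r ^ 2 * (16 / r ^ 3) * r ^ 3 := by
              field_simp
      have : (u r ^ 2 - 2 * m) * (w r - 2) / r ^ 3 * Real.exp (8 / r ^ 2)
          + f r * (Real.exp (8 / r ^ 2) * (-16 / r ^ 3))
          = ((u r ^ 2 - 2 * m) * (w r - 2) / r ^ 3
              - (u r ^ 2 - 2 * m) / r ^ 2 * (16 / r ^ 3)) * Real.exp (8 / r ^ 2) := by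
        simp only [hfdef]; ring
      rw [this]
      apply mul_nonpos_of_nonpos_of_nonneg _ hE.le
      linarith
  -- limit of f
  have hflim : Filter.Tendsto f Filter.atTop (nhds (b ^ 2)) := by
    have h2m : Filter.Tendsto (fun s : ℝ => 2 * m / s ^ 2) Filter.atTop (nhds 0) :=
      Filter.Tendsto.div_atTop tendsto_const_nhds (Filter.tendsto_pow_atTop (by norm_num))
    have h1 : Filter.Tendsto (fun s => (u s / s) ^ 2 - 2 * m / s ^ 2)
        Filter.atTop (nhds (b ^ 2 - 0)) := (hslope.pow 2).sub h2m
    rw [sub_zero] at h1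
    apply h1.congr'
    filter_upwards [Filter.eventually_gt_atTop (0:ℝ)] with s hs
    simp only [hfdef]
    field_simp
  -- limit of g
  have hglim : Filter.Tendsto g Filter.atTop (nhds (b ^ 2)) := by
    have h0 : Filter.Tendsto (fun s : ℝ => 8 / s ^ 2) Filter.atTop (nhds 0) :=
      Filter.Tendsto.div_atTop tendsto_const_nhds (Filter.tendsto_pow_atTop (by norm_num))
    have hE : Filter.Tendsto (fun s : ℝ => Real.exp (8 / s ^ 2)) Filter.atTop (nhds 1) := by
      have := (Real.continuous_exp.tendsto 0).comp h0
      simpa [Function.comp_def] using this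
    have := hflim.mul hE
    simpa using this
  intro r hr
  have hr0 := hrpos r hr
  have hr8 : (8:ℝ) ≤ r ^ 2 := le_trans hL8 (pow_le_pow_left₀ hL0.le hr 2)
  -- upper bound : f r ≤ b ^ 2
  have hupper : f r ≤ b ^ 2 := by
    apply ge_of_tendsto hflim
    filter_upwards [Filter.eventually_ge_atTop r] with s hs
    exact hfmono hr (le_trans hr hs) hs
  -- lower bound : b ^ 2 ≤ g r
  have hlower : b ^ 2 ≤ g r := by
    apply le_of_tendsto hglim
    filter_upwards [Filter.eventually_ge_atTop r] with s hs
    exact hganti hr (le_trans hr hs) hs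
  have hfpos : 0 < f r := by
    have := hularge r hr
    have : 0 < u r ^ 2 - 2 * m := by linarith
    positivity
  constructor
  · -- lower bound
    have hEle : Real.exp (8 / r ^ 2) ≤ Real.exp 1 := by
      apply Real.exp_le_exp.mpr
      rw [div_le_one (by positivity)]
      linarith
    have h1 : b ^ 2 ≤ f r * Real.exp 1 := by
      calc b ^ 2 ≤ f r * Real.exp (8 / r ^ 2) := hlower
        _ ≤ f r * Real.exp 1 := mul_le_mul_of_nonneg_left hEle hfpos.le
    have h2 : (Real.exp 1)⁻¹ * b ^ 2 ≤ f r := by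
      rw [inv_mul_le_iff₀ (Real.exp_pos 1)]
      linarith [h1, mul_comm (f r) (Real.exp 1)]
    have h3 : (Real.exp 1)⁻¹ * b ^ 2 * r ^ 2 ≤ f r * r ^ 2 :=
      mul_le_mul_of_nonneg_right h2 (by positivity)
    have h4 : f r * r ^ 2 = u r ^ 2 - 2 * m := by
      simp only [hfdef]; field_simp
    linarith
  · have h3 : f r * r ^ 2 ≤ b ^ 2 * r ^ 2 :=
      mul_le_mul_of_nonneg_right hupper (by positivity)
    have h4 : f r * r ^ 2 = u r ^ 2 - 2 * m := by
      simp only [hfdef]; field_simp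
    linarith
end
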